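/- For the binomial tree B_k with 2^{k−1} vertices (k ≥ 2), the recursive balanced-edge-splitting depth satisfies d(B_k) = k−1. -/

import Mathlib

/-- The graph on `V` consisting of the edges of `T` with both ends in `S`,
with the edge `{u, v}` removed. -/
def eRestrict {V : Type*} (T : SimpleGraph V) (S : Set V) (u v : V) : SimpleGraph V :=
  SimpleGraph.fromRel (fun x y => T.Adj x y ∧ x ∈ S ∧ y ∈ S ∧ s(x, y) ≠ s(u, v))

/-- After removing the edge `{u, v}` from the component `S`, the vertex set of
the piece containing `w`. -/
def side {V : Type*} (T : SimpleGraph V) (S : Set V) (u v w : V) : Set V :=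
  {x | (eRestrict T S u v).Reachable w x}

/-- The (absolute) difference of the orders of the two pieces obtained by
removing the edge `{u, v}` from the component `S`. -/
noncomputable def sideDiff {V : Type*} (T : SimpleGraph V) (S : Set V) (u v : V) : ℕ :=
  (((side T S u v u).ncard : ℤ) - ((side T S u v v).ncard : ℤ)).natAbs

/-- The edge `{u, v}` is a balanced edge of the component `S` of `T`:
it minimizes `sideDiff` among all edges of `T` inside `S`. -/
def BalancedIn {V : Type*} (T : SimpleGraph V) (S : Set V) (u v : V) : Prop :=
  T.Adj u v ∧ u ∈ S ∧ v ∈ S ∧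
    ∀ x y : V, T.Adj x y → x ∈ S → y ∈ S → sideDiff T S u v ≤ sideDiff T S x y

/-- `SplitDepth T S d` holds when the recursive balanced-edge-splitting process,
started on the component with vertex set `S`, can terminate in `d` rounds:
a singleton needs `0` rounds, and otherwise one balanced edge is removed and
the process continues in parallel on the two resulting components. -/
inductive SplitDepth {V : Type*} (T : SimpleGraph V) : Set V → ℕ → Prop
  | single (v : V) : SplitDepth T {v} 0
  | split (S : Set V) (u v : V) (d₁ d₂ : ℕ) :
      BalancedIn T S u v →
      SplitDepth T (side T S u v u) d₁ →
      SplitDepth T (side T S u v v) d₂ →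
      SplitDepth T S (1 + max d₁ d₂)

/-- The binomial tree `B_k` on `2^(k-1)` vertices: `B_1` is a single vertex,
and `B_k` is two copies of `B_{k-1}` joined by an edge between their roots.
Equivalently, each nonzero vertex `x` is joined to `x` with its highest set
bit removed. -/
def binomialTree (k : ℕ) : SimpleGraph (Fin (2 ^ (k - 1))) :=
  SimpleGraph.fromRel (fun x y =>
    (x : ℕ) ≠ 0 ∧ (y : ℕ) = (x : ℕ) - 2 ^ Nat.log 2 (x : ℕ))


section Aux

open SimpleGraph

lemma strip_mod {a j L : ℕ} (hj : j ≤ L) (ha : 2 ^ L ≤ a) :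
    (a - 2 ^ L) % 2 ^ j = a % 2 ^ j := by
  conv_rhs => rw [← Nat.sub_add_cancel ha]
  rw [show (2:ℕ) ^ L = 2 ^ j * 2 ^ (L - j) by rw [← pow_add]; congr 1; omega,
    Nat.add_mul_mod_self_left]

lemma eRestrict_adj {V : Type*} (T : SimpleGraph V) (S : Set V) (u v a b : V) :
    (eRestrict T S u v).Adj a b ↔
      T.Adj a b ∧ a ∈ S ∧ b ∈ S ∧ s(a, b) ≠ s(u, v) := by
  simp only [eRestrict, SimpleGraph.fromRel_adj]
  constructor
  · rintro ⟨hne, h | h⟩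
    · exact ⟨h.1, h.2.1, h.2.2.1, h.2.2.2⟩
    · refine ⟨h.1.symm, h.2.2.1, h.2.1, ?_⟩
      rw [Sym2.eq_swap (a := a)]
      exact h.2.2.2
  · rintro ⟨h1, h2, h3, h4⟩
    exact ⟨h1.ne, Or.inl ⟨h1, h2, h3, h4⟩⟩

lemma eRestrict_comm {V : Type*} (T : SimpleGraph V) (S : Set V) (u v : V) :
    eRestrict T S u v = eRestrict T S v u := by
  unfold eRestrict
  rw [show s(u, v) = s(v, u) from Sym2.eq_swap]

lemma side_comm {V : Type*} (T : SimpleGraph V) (S : Set V) (u v w : V) :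
    side T S u v w = side T S v u w := by
  unfold side
  rw [eRestrict_comm]

lemma sideDiff_comm {V : Type*} (T : SimpleGraph V) (S : Set V) (u v : V) :
    sideDiff T S u v = sideDiff T S v u := by
  unfold sideDiff
  rw [side_comm T S u v u, side_comm T S u v v]
  omega

lemma reach_closed {V : Type*} {G : SimpleGraph V} {C : Set V}
    (hC : ∀ a b, G.Adj a b → a ∈ C → b ∈ C) {a b : V}
    (h : G.Reachable a b) (ha : a ∈ C) : b ∈ C := by
  rw [SimpleGraph.reachable_iff_reflTransGen] at h
  induction h with
  | refl => exact ha
  | tail _ hadj ih => exact hC _ _ hadj ih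

lemma ncard_modClass (K j c : ℕ) (hj : j ≤ K) (hc : c < 2 ^ j) :
    {z : Fin (2 ^ K) | (z : ℕ) % 2 ^ j = c}.ncard = 2 ^ (K - j) := by
  rw [← Nat.card_coe_set_eq]
  have hpow : (2:ℕ) ^ j * 2 ^ (K - j) = 2 ^ K := by rw [← pow_add]; congr 1; omega
  let f : Fin (2 ^ (K - j)) → {z : Fin (2 ^ K) | (z : ℕ) % 2 ^ j = c} := fun t =>
    ⟨⟨c + 2 ^ j * (t : ℕ), by
      have ht : (t : ℕ) + 1 ≤ 2 ^ (K - j) := t.isLt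
      calc c + 2 ^ j * (t : ℕ) < 2 ^ j * ((t : ℕ) + 1) := by ring_nf; omega
        _ ≤ 2 ^ j * 2 ^ (K - j) := Nat.mul_le_mul_left _ ht
        _ = 2 ^ K := hpow⟩, by
      simp [Nat.add_mul_mod_self_left, Nat.mod_eq_of_lt hc]⟩
  have hbij : Function.Bijective f := by
    constructor
    · intro t1 t2 h
      have hval : c + 2 ^ j * (t1 : ℕ) = c + 2 ^ j * (t2 : ℕ) := by
        have h' : ((f t1 : Fin (2 ^ K)) : ℕ) = ((f t2 : Fin (2 ^ K)) : ℕ) := by rw [h]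
        exact h'
      have h2 : 2 ^ j * (t1 : ℕ) = 2 ^ j * (t2 : ℕ) := by omega
      exact Fin.ext (Nat.eq_of_mul_eq_mul_left (Nat.pow_pos (n := j) (by norm_num)) h2)
    · rintro ⟨⟨z, hz⟩, hzc⟩
      simp only [Set.mem_setOf_eq] at hzc
      refine ⟨⟨z / 2 ^ j, ?_⟩, ?_⟩
      · have : z < 2 ^ j * 2 ^ (K - j) := by omega
        exact Nat.div_lt_of_lt_mul (by omega)
      · apply Subtype.ext
        apply Fin.ext
        show c + 2 ^ j * (z / 2 ^ j) = z
        have := Nat.mod_add_div z (2 ^ j)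
        omega
  rw [← Nat.card_eq_of_bijective f hbij, Nat.card_eq_fintype_card, Fintype.card_fin]

/-- The "oriented edge" relation of the binomial tree. -/
def upEdge (k : ℕ) (a b : Fin (2 ^ (k - 1))) : Prop :=
  (a : ℕ) ≠ 0 ∧ (b : ℕ) = (a : ℕ) - 2 ^ Nat.log 2 (a : ℕ)

lemma upEdge_lt {k : ℕ} {a b : Fin (2 ^ (k - 1))} (h : upEdge k a b) :
    (b : ℕ) < (a : ℕ) := by
  have h1 : 2 ^ Nat.log 2 (a : ℕ) ≤ (a : ℕ) := Nat.pow_log_le_self 2 h.1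
  have h2 : 0 < 2 ^ Nat.log 2 (a : ℕ) := Nat.pow_pos (by norm_num)
  have h3 := h.2
  omega

lemma upEdge_adj {k : ℕ} {a b : Fin (2 ^ (k - 1))} (h : upEdge k a b) :
    (binomialTree k).Adj a b := by
  rw [binomialTree, SimpleGraph.fromRel_adj]
  refine ⟨fun he => ?_, Or.inl ⟨h.1, h.2⟩⟩
  have h1 := upEdge_lt h
  rw [he] at h1
  exact absurd h1 (lt_irrefl _)

lemma adj_iff {k : ℕ} (a b : Fin (2 ^ (k - 1))) :
    (binomialTree k).Adj a b ↔ a ≠ b ∧ (upEdge k a b ∨ upEdge k b a) := by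
  rw [binomialTree, SimpleGraph.fromRel_adj]
  rfl

end Aux

section Sides

open SimpleGraph

lemma side_spec (k m : ℕ) (x y : Fin (2 ^ (k - 1)))
    (hx0 : (x : ℕ) ≠ 0)
    (hy : (y : ℕ) = (x : ℕ) - 2 ^ Nat.log 2 (x : ℕ))
    (hm : m ≤ Nat.log 2 (x : ℕ)) :
    side (binomialTree k) {z : Fin (2 ^ (k - 1)) | (z : ℕ) % 2 ^ m = (x : ℕ) % 2 ^ m} x y x
      = {z : Fin (2 ^ (k - 1)) | (z : ℕ) % 2 ^ (Nat.log 2 (x : ℕ) + 1) = (x : ℕ)} ∧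
    side (binomialTree k) {z : Fin (2 ^ (k - 1)) | (z : ℕ) % 2 ^ m = (x : ℕ) % 2 ^ m} x y y
      = {z : Fin (2 ^ (k - 1)) | (z : ℕ) % 2 ^ m = (x : ℕ) % 2 ^ m}
        \ {z : Fin (2 ^ (k - 1)) | (z : ℕ) % 2 ^ (Nat.log 2 (x : ℕ) + 1) = (x : ℕ)} := by
  set L := Nat.log 2 (x : ℕ) with hLdef
  set S : Set (Fin (2 ^ (k - 1))) := {z | (z : ℕ) % 2 ^ m = (x : ℕ) % 2 ^ m} with hSdef
  set C : Set (Fin (2 ^ (k - 1))) := {z | (z : ℕ) % 2 ^ (L + 1) = (x : ℕ)} with hCdef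
  set G : SimpleGraph (Fin (2 ^ (k - 1))) := eRestrict (binomialTree k) S x y with hGdef
  have hxL : 2 ^ L ≤ (x : ℕ) := Nat.pow_log_le_self 2 hx0
  have hxlt : (x : ℕ) < 2 ^ (L + 1) := Nat.lt_pow_succ_log_self (by norm_num) _
  have hLpos : 0 < 2 ^ L := Nat.pow_pos (by norm_num)
  have hyx : (y : ℕ) < (x : ℕ) := by omega
  have hSx : x ∈ S := rfl
  have hSy : y ∈ S := by
    show (y : ℕ) % 2 ^ m = (x : ℕ) % 2 ^ m
    rw [hy]
    exact strip_mod hm hxL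
  have hCx : x ∈ C := Nat.mod_eq_of_lt hxlt
  have hCy : y ∉ C := by
    show ¬ (y : ℕ) % 2 ^ (L + 1) = (x : ℕ)
    rw [Nat.mod_eq_of_lt (lt_trans hyx hxlt)]
    omega
  -- membership in C determines membership in S
  have hCS : ∀ z : Fin (2 ^ (k - 1)), (z : ℕ) % 2 ^ (L + 1) = (x : ℕ) →
      (z : ℕ) % 2 ^ m = (x : ℕ) % 2 ^ m := by
    intro z hz
    have h1 : (z : ℕ) % 2 ^ m = ((z : ℕ) % 2 ^ (L + 1)) % 2 ^ m :=
      (Nat.mod_mod_of_dvd _ (pow_dvd_pow 2 (by omega))).symm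
    rw [h1, hz]
  -- crossing an edge other than (x,y) preserves membership in C
  have subkey : ∀ c d : Fin (2 ^ (k - 1)), upEdge k c d → s(c, d) ≠ s(x, y) →
      ((c : ℕ) % 2 ^ (L + 1) = (x : ℕ) ↔ (d : ℕ) % 2 ^ (L + 1) = (x : ℕ)) := by
    intro c d hcd hs
    obtain ⟨hc0, hd⟩ := hcd
    have hc1 : 2 ^ Nat.log 2 (c : ℕ) ≤ (c : ℕ) := Nat.pow_log_le_self 2 hc0
    have hc2 : (c : ℕ) < 2 ^ (Nat.log 2 (c : ℕ) + 1) := Nat.lt_pow_succ_log_self (by norm_num) _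
    rcases le_or_gt (L + 1) (Nat.log 2 (c : ℕ)) with h | h
    · rw [hd, strip_mod h hc1]
    · have hcle : (c : ℕ) < 2 ^ (L + 1) :=
        lt_of_lt_of_le hc2 (Nat.pow_le_pow_right (by norm_num) (by omega))
      constructor
      · intro hc
        exfalso
        have hcx : (c : ℕ) = (x : ℕ) := by rwa [Nat.mod_eq_of_lt hcle] at hc
        have hcx' : c = x := Fin.ext hcx
        have hdy : d = y := Fin.ext (by rw [hd, hy, hcx])
        exact hs (by rw [hcx', hdy])
      · intro hdx
        exfalso
        have hdc : (d : ℕ) < (c : ℕ) := upEdge_lt ⟨hc0, hd⟩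
        have hdx' : (d : ℕ) = (x : ℕ) := by
          rwa [Nat.mod_eq_of_lt (lt_trans hdc hcle)] at hdx
        have h2 : (c : ℕ) = (d : ℕ) + 2 ^ Nat.log 2 (c : ℕ) := by
          have := Nat.pow_pos (n := Nat.log 2 (c : ℕ)) (show 0 < 2 by norm_num)
          omega
        have h3 : (2 : ℕ) ^ Nat.log 2 (c : ℕ) ≤ 2 ^ L :=
          Nat.pow_le_pow_right (by norm_num) (by omega)
        have h4 : (2 : ℕ) ^ (Nat.log 2 (c : ℕ) + 1) = 2 ^ Nat.log 2 (c : ℕ) * 2 := pow_succ 2 _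
        omega
  have hCclosed : ∀ a b, G.Adj a b → a ∈ C → b ∈ C := by
    intro a b hab haC
    rw [hGdef, eRestrict_adj] at hab
    obtain ⟨hT, _, _, hs⟩ := hab
    rcases ((adj_iff a b).mp hT).2 with h | h
    · exact (subkey a b h hs).mp haC
    · refine (subkey b a h ?_).mpr haC
      rw [show s(b, a) = s(a, b) from Sym2.eq_swap]
      exact hs
  have hDclosed : ∀ a b, G.Adj a b → a ∈ S \ C → b ∈ S \ C := by
    rintro a b hab ⟨haS, haC⟩
    have hbS : b ∈ S := by
      rw [hGdef, eRestrict_adj] at hab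
      exact hab.2.2.1
    exact ⟨hbS, fun hbC => haC (hCclosed b a hab.symm hbC)⟩
  -- everything in C is reachable from x
  have reach_x : ∀ n : ℕ, ∀ z : Fin (2 ^ (k - 1)), (z : ℕ) = n →
      (z : ℕ) % 2 ^ (L + 1) = (x : ℕ) → G.Reachable x z := by
    intro n
    induction n using Nat.strong_induction_on with
    | _ n ih =>
      intro z hzn hzC
      by_cases hzx : z = x
      · rw [hzx]
      · have hzx' : (z : ℕ) ≠ (x : ℕ) := fun h => hzx (Fin.ext h)
        have hz2 : 2 ^ (L + 1) ≤ (z : ℕ) := by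
          by_contra hcon
          push_neg at hcon
          rw [Nat.mod_eq_of_lt hcon] at hzC
          exact hzx' hzC
        have hz0 : (z : ℕ) ≠ 0 := by
          have := Nat.pow_pos (n := L + 1) (show 0 < 2 by norm_num)
          omega
        have hLz : L + 1 ≤ Nat.log 2 (z : ℕ) := (Nat.le_log_iff_pow_le (by norm_num) hz0).mpr hz2
        have hpz : 2 ^ Nat.log 2 (z : ℕ) ≤ (z : ℕ) := Nat.pow_log_le_self 2 hz0
        have hpzpos : 0 < 2 ^ Nat.log 2 (z : ℕ) := Nat.pow_pos (by norm_num)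
        set z' : Fin (2 ^ (k - 1)) :=
          ⟨(z : ℕ) - 2 ^ Nat.log 2 (z : ℕ), by have := z.isLt; omega⟩ with hz'def
        have hz'val : (z' : ℕ) = (z : ℕ) - 2 ^ Nat.log 2 (z : ℕ) := rfl
        have hz'C : (z' : ℕ) % 2 ^ (L + 1) = (x : ℕ) := by
          show ((z : ℕ) - 2 ^ Nat.log 2 (z : ℕ)) % 2 ^ (L + 1) = (x : ℕ)
          rw [strip_mod hLz hpz]
          exact hzC
        have hreach' : G.Reachable x z' := ih _ (by show (z : ℕ) - _ < n; omega) z' rfl hz'C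
        have hadj : G.Adj z' z := by
          rw [hGdef, eRestrict_adj]
          refine ⟨(upEdge_adj ⟨hz0, rfl⟩).symm, hCS z' hz'C, hCS z hzC, ?_⟩
          intro hss
          rw [Sym2.eq_iff] at hss
          rcases hss with ⟨h1, h2⟩ | ⟨h1, h2⟩
          · have hv2 : (z : ℕ) = (y : ℕ) := congrArg Fin.val h2
            omega
          · have hv2 : (z : ℕ) = (x : ℕ) := congrArg Fin.val h2
            omega
        exact hreach'.trans hadj.reachable
  -- everything in S outside C is reachable from the root of S
  have hrlt : (x : ℕ) % 2 ^ m < 2 ^ (k - 1) := by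
    have h1 : (x : ℕ) % 2 ^ m ≤ (x : ℕ) := Nat.mod_le _ _
    have := x.isLt
    omega
  set ρ : Fin (2 ^ (k - 1)) := ⟨(x : ℕ) % 2 ^ m, hrlt⟩ with hρdef
  have reach_ρ : ∀ n : ℕ, ∀ z : Fin (2 ^ (k - 1)), (z : ℕ) = n →
      z ∈ S → (z : ℕ) % 2 ^ (L + 1) ≠ (x : ℕ) → G.Reachable ρ z := by
    intro n
    induction n using Nat.strong_induction_on with
    | _ n ih =>
      intro z hzn hzS hzC
      by_cases hzρ : z = ρ
      · rw [hzρ]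
      · have hzρ' : (z : ℕ) ≠ (x : ℕ) % 2 ^ m := fun h => hzρ (Fin.ext h)
        have hzS' : (z : ℕ) % 2 ^ m = (x : ℕ) % 2 ^ m := hzS
        have hmod : (x : ℕ) % 2 ^ m < 2 ^ m := Nat.mod_lt _ (Nat.pow_pos (by norm_num))
        have hz2 : 2 ^ m ≤ (z : ℕ) := by
          by_contra hcon
          push_neg at hcon
          rw [Nat.mod_eq_of_lt hcon] at hzS'
          exact hzρ' hzS'
        have hz0 : (z : ℕ) ≠ 0 := by
          have := Nat.pow_pos (n := m) (show 0 < 2 by norm_num)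
          omega
        have hLz : m ≤ Nat.log 2 (z : ℕ) := (Nat.le_log_iff_pow_le (by norm_num) hz0).mpr hz2
        have hpz : 2 ^ Nat.log 2 (z : ℕ) ≤ (z : ℕ) := Nat.pow_log_le_self 2 hz0
        have hpzpos : 0 < 2 ^ Nat.log 2 (z : ℕ) := Nat.pow_pos (by norm_num)
        have hzlt : (z : ℕ) < 2 ^ (Nat.log 2 (z : ℕ) + 1) := Nat.lt_pow_succ_log_self (by norm_num) _
        set z' : Fin (2 ^ (k - 1)) :=
          ⟨(z : ℕ) - 2 ^ Nat.log 2 (z : ℕ), by have := z.isLt; omega⟩ with hz'def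
        have hz'val : (z' : ℕ) = (z : ℕ) - 2 ^ Nat.log 2 (z : ℕ) := rfl
        have hz'S : z' ∈ S := by
          show ((z : ℕ) - 2 ^ Nat.log 2 (z : ℕ)) % 2 ^ m = (x : ℕ) % 2 ^ m
          rw [strip_mod hLz hpz]
          exact hzS'
        have hz'C : (z' : ℕ) % 2 ^ (L + 1) ≠ (x : ℕ) := by
          show ¬ ((z : ℕ) - 2 ^ Nat.log 2 (z : ℕ)) % 2 ^ (L + 1) = (x : ℕ)
          intro hcon
          rcases le_or_gt (L + 1) (Nat.log 2 (z : ℕ)) with h | h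
          · rw [strip_mod h hpz] at hcon
            exact hzC hcon
          · have hzlt' : (z : ℕ) < 2 ^ (L + 1) :=
              lt_of_lt_of_le hzlt (Nat.pow_le_pow_right (by norm_num) (by omega))
            have hz'x : (z : ℕ) - 2 ^ Nat.log 2 (z : ℕ) = (x : ℕ) := by
              rwa [Nat.mod_eq_of_lt (by omega)] at hcon
            have h3 : (2 : ℕ) ^ Nat.log 2 (z : ℕ) ≤ 2 ^ L :=
              Nat.pow_le_pow_right (by norm_num) (by omega)
            have h4 : (2 : ℕ) ^ (Nat.log 2 (z : ℕ) + 1) = 2 ^ Nat.log 2 (z : ℕ) * 2 :=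
              pow_succ 2 _
            omega
        have hreach' : G.Reachable ρ z' := ih _ (by show (z : ℕ) - _ < n; omega) z' rfl hz'S hz'C
        have hadj : G.Adj z' z := by
          rw [hGdef, eRestrict_adj]
          refine ⟨(upEdge_adj ⟨hz0, rfl⟩).symm, hz'S, hzS, ?_⟩
          intro hss
          rw [Sym2.eq_iff] at hss
          rcases hss with ⟨h1, h2⟩ | ⟨h1, h2⟩
          · have hv2 : (z : ℕ) = (y : ℕ) := congrArg Fin.val h2
            have hv1 : (z' : ℕ) = (x : ℕ) := congrArg Fin.val h1
            omega
          · have hv2 : (z : ℕ) = (x : ℕ) := congrArg Fin.val h2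
            rw [Nat.mod_eq_of_lt (show (z : ℕ) < 2 ^ (L + 1) by omega)] at hzC
            exact hzC hv2
        exact hreach'.trans hadj.reachable
  have hρS : ρ ∈ S := by
    show (x : ℕ) % 2 ^ m % 2 ^ m = (x : ℕ) % 2 ^ m
    exact Nat.mod_mod_of_dvd _ dvd_rfl
  have hreachy : G.Reachable ρ y := by
    apply reach_ρ (y : ℕ) y rfl hSy
    show ¬ (y : ℕ) % 2 ^ (L + 1) = (x : ℕ)
    rw [Nat.mod_eq_of_lt (lt_trans hyx hxlt)]
    omega
  constructor
  · ext z
    simp only [side, Set.mem_setOf_eq]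
    constructor
    · intro h
      exact reach_closed hCclosed h hCx
    · intro h
      exact reach_x (z : ℕ) z rfl h
  · ext z
    simp only [side, Set.mem_setOf_eq]
    constructor
    · intro h
      exact reach_closed hDclosed h ⟨hSy, hCy⟩
    · rintro ⟨hzS, hzC⟩
      exact hreachy.symm.trans (reach_ρ (z : ℕ) z rfl hzS hzC)

end Sides

section Diff

lemma sideDiff_spec (k m : ℕ) (x y : Fin (2 ^ (k - 1)))
    (hx0 : (x : ℕ) ≠ 0)
    (hy : (y : ℕ) = (x : ℕ) - 2 ^ Nat.log 2 (x : ℕ))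
    (hm : m ≤ Nat.log 2 (x : ℕ)) :
    sideDiff (binomialTree k) {z : Fin (2 ^ (k - 1)) | (z : ℕ) % 2 ^ m = (x : ℕ) % 2 ^ m} x y
      = 2 ^ (k - 1 - m) - 2 ^ (k - 1 - Nat.log 2 (x : ℕ)) := by
  obtain ⟨h1, h2⟩ := side_spec k m x y hx0 hy hm
  set L := Nat.log 2 (x : ℕ) with hLdef
  have hLK : L < k - 1 := (Nat.log_lt_iff_lt_pow (by norm_num) hx0).mpr x.isLt
  have hmK : m ≤ k - 1 := by omega
  have hxlt : (x : ℕ) < 2 ^ (L + 1) := Nat.lt_pow_succ_log_self (by norm_num) _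
  have hxm : (x : ℕ) % 2 ^ m < 2 ^ m := Nat.mod_lt _ (Nat.pow_pos (by norm_num))
  have hC : {z : Fin (2 ^ (k - 1)) | (z : ℕ) % 2 ^ (L + 1) = (x : ℕ)}.ncard
      = 2 ^ (k - 1 - (L + 1)) := ncard_modClass (k - 1) (L + 1) (x : ℕ) (by omega) hxlt
  have hS : {z : Fin (2 ^ (k - 1)) | (z : ℕ) % 2 ^ m = (x : ℕ) % 2 ^ m}.ncard
      = 2 ^ (k - 1 - m) := ncard_modClass (k - 1) m _ hmK hxm
  have hsub : {z : Fin (2 ^ (k - 1)) | (z : ℕ) % 2 ^ (L + 1) = (x : ℕ)}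
      ⊆ {z : Fin (2 ^ (k - 1)) | (z : ℕ) % 2 ^ m = (x : ℕ) % 2 ^ m} := by
    intro z hz
    have h3 : (z : ℕ) % 2 ^ m = ((z : ℕ) % 2 ^ (L + 1)) % 2 ^ m :=
      (Nat.mod_mod_of_dvd _ (pow_dvd_pow 2 (by omega))).symm
    show (z : ℕ) % 2 ^ m = (x : ℕ) % 2 ^ m
    rw [h3, hz]
  unfold sideDiff
  rw [h1, h2, Set.ncard_diff hsub, hC, hS]
  have hp1 : (2 : ℕ) ^ (k - 1 - (L + 1)) + 2 ^ (k - 1 - (L + 1)) = 2 ^ (k - 1 - L) := by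
    rw [show k - 1 - L = (k - 1 - (L + 1)) + 1 by omega, pow_succ]
    omega
  have hp2 : (2 : ℕ) ^ (k - 1 - L) ≤ 2 ^ (k - 1 - m) :=
    Nat.pow_le_pow_right (by norm_num) (by omega)
  omega

lemma balanced_edge_id (k m : ℕ) (u v : Fin (2 ^ (k - 1))) (r : ℕ)
    (hup : upEdge k u v)
    (hu : (u : ℕ) % 2 ^ m = r) (hv : (v : ℕ) % 2 ^ m = r)
    (hdiff : sideDiff (binomialTree k) {z : Fin (2 ^ (k - 1)) | (z : ℕ) % 2 ^ m = r} u v = 0) :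
    (u : ℕ) = r + 2 ^ m ∧ (v : ℕ) = r := by
  obtain ⟨hu0, hvdef⟩ := hup
  set Lu := Nat.log 2 (u : ℕ) with hLudef
  have hu1 : 2 ^ Lu ≤ (u : ℕ) := Nat.pow_log_le_self 2 hu0
  have hu2 : (u : ℕ) < 2 ^ (Lu + 1) := Nat.lt_pow_succ_log_self (by norm_num) _
  have hvu : (v : ℕ) < (u : ℕ) := upEdge_lt ⟨hu0, hvdef⟩
  have hmLu : m ≤ Lu := by
    by_contra h
    push_neg at h
    have hlt : (u : ℕ) < 2 ^ m :=
      lt_of_lt_of_le hu2 (Nat.pow_le_pow_right (by norm_num) (by omega))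
    have huu : (u : ℕ) = r := by rw [← hu, Nat.mod_eq_of_lt hlt]
    have hvv : (v : ℕ) = r := by rw [← hv, Nat.mod_eq_of_lt (by omega)]
    omega
  have hSeq : {z : Fin (2 ^ (k - 1)) | (z : ℕ) % 2 ^ m = r}
      = {z : Fin (2 ^ (k - 1)) | (z : ℕ) % 2 ^ m = (u : ℕ) % 2 ^ m} := by rw [hu]
  rw [hSeq, sideDiff_spec k m u v hu0 hvdef hmLu] at hdiff
  have hLK : Lu < k - 1 := (Nat.log_lt_iff_lt_pow (by norm_num) hu0).mpr u.isLt
  rw [← hLudef] at hdiff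
  have hLum : Lu = m := by
    by_contra hne
    have hlt : k - 1 - Lu < k - 1 - m := by omega
    have := Nat.pow_lt_pow_right (show 1 < 2 by norm_num) hlt
    omega
  rw [hLum] at hu1 hu2 hvdef
  have hp : (2 : ℕ) ^ (m + 1) = 2 ^ m * 2 := pow_succ 2 m
  have hvlt : (v : ℕ) < 2 ^ m := by omega
  have hvr : (v : ℕ) = r := by rw [← hv, Nat.mod_eq_of_lt hvlt]
  omega

end Diff

section MainInd

lemma splitDepth_inv {V : Type*} {T : SimpleGraph V} {S : Set V} {d : ℕ}
    (h : SplitDepth T S d) :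
    (∃ v, S = {v} ∧ d = 0) ∨
      ∃ u v d1 d2, BalancedIn T S u v ∧ SplitDepth T (side T S u v u) d1 ∧
        SplitDepth T (side T S u v v) d2 ∧ d = 1 + max d1 d2 := by
  cases h with
  | single v => exact Or.inl ⟨v, rfl, rfl⟩
  | split S u v d1 d2 hb h1 h2 => exact Or.inr ⟨u, v, d1, d2, hb, h1, h2, rfl⟩

lemma splitDepth_class (k : ℕ) :
    ∀ t m r : ℕ, m ≤ k - 1 → k - 1 - m = t → r < 2 ^ m →
      (∃ d, SplitDepth (binomialTree k) {z : Fin (2 ^ (k - 1)) | (z : ℕ) % 2 ^ m = r} d) ∧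
      (∀ d, SplitDepth (binomialTree k) {z : Fin (2 ^ (k - 1)) | (z : ℕ) % 2 ^ m = r} d
        → d = t) := by
  intro t
  induction t with
  | zero =>
    intro m r hm ht hr
    have hm' : m = k - 1 := by omega
    subst hm'
    have hrN : r < 2 ^ (k - 1) := hr
    have hSeq : {z : Fin (2 ^ (k - 1)) | (z : ℕ) % 2 ^ (k - 1) = r}
        = {(⟨r, hrN⟩ : Fin (2 ^ (k - 1)))} := by
      ext z
      simp only [Set.mem_setOf_eq, Set.mem_singleton_iff, Fin.ext_iff]
      rw [Nat.mod_eq_of_lt z.isLt]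
    rw [hSeq]
    refine ⟨⟨0, SplitDepth.single _⟩, ?_⟩
    intro d hd
    rcases splitDepth_inv hd with ⟨v, _, hd0⟩ | ⟨u, v, d1, d2, hbal, _, _, _⟩
    · exact hd0
    · obtain ⟨hadj, huS, hvS, _⟩ := hbal
      rw [Set.mem_singleton_iff] at huS hvS
      exact absurd (huS.trans hvS.symm) hadj.ne
  | succ t ih =>
    intro m r hm ht hr
    have hmK : m < k - 1 := by omega
    have hp : (2 : ℕ) ^ (m + 1) = 2 ^ m * 2 := pow_succ 2 m
    have hm1 : m + 1 ≤ k - 1 := by omega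
    have hpos : 0 < (2 : ℕ) ^ m := Nat.pow_pos (by norm_num)
    have hxlt : r + 2 ^ m < 2 ^ (k - 1) := by
      have h2 : (2 : ℕ) ^ (m + 1) ≤ 2 ^ (k - 1) := Nat.pow_le_pow_right (by norm_num) hm1
      omega
    set X : Fin (2 ^ (k - 1)) := ⟨r + 2 ^ m, hxlt⟩ with hXdef
    set Y : Fin (2 ^ (k - 1)) := ⟨r, by omega⟩ with hYdef
    have hXval : (X : ℕ) = r + 2 ^ m := rfl
    have hYval : (Y : ℕ) = r := rfl
    have hX0 : (X : ℕ) ≠ 0 := by omega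
    have hlogX : Nat.log 2 (X : ℕ) = m :=
      Nat.log_eq_of_pow_le_of_lt_pow (by omega) (by omega)
    have hY2 : (Y : ℕ) = (X : ℕ) - 2 ^ Nat.log 2 (X : ℕ) := by
      rw [hlogX]; omega
    have hXmod : (X : ℕ) % 2 ^ m = r := by
      rw [hXval, Nat.add_mod_right, Nat.mod_eq_of_lt hr]
    have hYmod : (Y : ℕ) % 2 ^ m = r := by
      rw [hYval, Nat.mod_eq_of_lt hr]
    have hSeq : {z : Fin (2 ^ (k - 1)) | (z : ℕ) % 2 ^ m = r}
        = {z : Fin (2 ^ (k - 1)) | (z : ℕ) % 2 ^ m = (X : ℕ) % 2 ^ m} := by rw [hXmod]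
    obtain ⟨hsx, hsy⟩ := side_spec k m X Y hX0 hY2 (by rw [hlogX])
    rw [hlogX, hXval] at hsx hsy
    rw [← hSeq] at hsx hsy
    -- rewrite the `y`-side as a mod class
    have mod_split : ∀ z : Fin (2 ^ (k - 1)), (z : ℕ) % 2 ^ (m + 1) = (z : ℕ) % 2 ^ m
        ∨ (z : ℕ) % 2 ^ (m + 1) = (z : ℕ) % 2 ^ m + 2 ^ m := by
      intro z
      have h := Nat.div_add_mod ((z : ℕ) % 2 ^ (m + 1)) (2 ^ m)
      have hmod : (z : ℕ) % 2 ^ (m + 1) % 2 ^ m = (z : ℕ) % 2 ^ m :=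
        Nat.mod_mod_of_dvd _ (pow_dvd_pow 2 (by omega))
      have hlt : (z : ℕ) % 2 ^ (m + 1) < 2 ^ m * 2 := by
        rw [← pow_succ]
        exact Nat.mod_lt _ (Nat.pow_pos (by norm_num))
      have hq : (z : ℕ) % 2 ^ (m + 1) / 2 ^ m < 2 := by
        by_contra hcon
        push_neg at hcon
        have h5 : 2 ^ m * 2 ≤ 2 ^ m * ((z : ℕ) % 2 ^ (m + 1) / 2 ^ m) :=
          Nat.mul_le_mul_left _ hcon
        omega
      obtain ⟨q, hq0⟩ : ∃ q, (z : ℕ) % 2 ^ (m + 1) / 2 ^ m = q := ⟨_, rfl⟩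
      rw [hq0] at h hq
      rcases (show q = 0 ∨ q = 1 by omega) with h0 | h0 <;> rw [h0] at h <;> omega
    have hsy' : side (binomialTree k) {z : Fin (2 ^ (k - 1)) | (z : ℕ) % 2 ^ m = r} X Y Y
        = {z : Fin (2 ^ (k - 1)) | (z : ℕ) % 2 ^ (m + 1) = r} := by
      rw [hsy]
      ext z
      simp only [Set.mem_diff, Set.mem_setOf_eq]
      rcases mod_split z with h | h
      · constructor
        · rintro ⟨hz1, _⟩
          omega
        · intro hz
          omega
      · constructor
        · rintro ⟨hz1, hz2⟩
          omega
        · intro hz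
          omega
    have hXvalS : (X : ℕ) % 2 ^ m = r := hXmod
    have hdiff0 : sideDiff (binomialTree k) {z : Fin (2 ^ (k - 1)) | (z : ℕ) % 2 ^ m = r} X Y
        = 0 := by
      rw [hSeq, sideDiff_spec k m X Y hX0 hY2 (by rw [hlogX]), hlogX, Nat.sub_self]
    have hbal : BalancedIn (binomialTree k) {z : Fin (2 ^ (k - 1)) | (z : ℕ) % 2 ^ m = r} X Y :=
      ⟨upEdge_adj ⟨hX0, hY2⟩, hXmod, hYmod,
        fun a b _ _ _ => by rw [hdiff0]; exact Nat.zero_le _⟩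
    obtain ⟨⟨d1, hd1⟩, huniq1⟩ := ih (m + 1) (r + 2 ^ m) hm1 (by omega) (by omega)
    obtain ⟨⟨d2, hd2⟩, huniq2⟩ := ih (m + 1) r hm1 (by omega) (by omega)
    constructor
    · exact ⟨1 + max d1 d2,
        SplitDepth.split _ X Y d1 d2 hbal (by rw [hsx]; exact hd1) (by rw [hsy']; exact hd2)⟩
    · intro d hd
      rcases splitDepth_inv hd with ⟨v, hv, _⟩ | ⟨u, v, d1', d2', hbal', h1', h2', hdeq⟩
      · exfalso
        have hcard : ({z : Fin (2 ^ (k - 1)) | (z : ℕ) % 2 ^ m = r}).ncard = 2 ^ (t + 1) := by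
          rw [ncard_modClass (k - 1) m r hm hr, ht]
        rw [hv, Set.ncard_singleton] at hcard
        have h6 : (2 : ℕ) ^ 1 ≤ 2 ^ (t + 1) := Nat.pow_le_pow_right (by norm_num) (by omega)
        omega
      · obtain ⟨hadj, huS, hvS, hmin⟩ := hbal'
        have hdiffuv : sideDiff (binomialTree k)
            {z : Fin (2 ^ (k - 1)) | (z : ℕ) % 2 ^ m = r} u v = 0 :=
          Nat.le_antisymm
            (hdiff0 ▸ hmin X Y (upEdge_adj ⟨hX0, hY2⟩) hXmod hYmod) (Nat.zero_le _)
        rcases ((adj_iff u v).mp hadj).2 with hup | hup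
        · obtain ⟨hu', hv'⟩ := balanced_edge_id k m u v r hup huS hvS hdiffuv
          have huX : u = X := Fin.ext (by rw [hu', hXval])
          have hvY : v = Y := Fin.ext (by rw [hv', hYval])
          rw [huX, hvY, hsx] at h1'
          rw [huX, hvY, hsy'] at h2'
          rw [hdeq, huniq1 d1' h1', huniq2 d2' h2', Nat.max_self]
          omega
        · obtain ⟨hv', hu'⟩ := balanced_edge_id k m v u r hup hvS huS
            ((sideDiff_comm _ _ v u).trans hdiffuv)
          have hvX : v = X := Fin.ext (by rw [hv', hXval])
          have huY : u = Y := Fin.ext (by rw [hu', hYval])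
          rw [side_comm, hvX, huY, hsy'] at h1'
          rw [side_comm, hvX, huY, hsx] at h2'
          rw [hdeq, huniq2 d1' h1', huniq1 d2' h2', Nat.max_self]
          omega

end MainInd

/-- For the binomial tree `B_k` (`k ≥ 2`), the recursive balanced-edge-splitting
depth is well defined and equals `k - 1`. -/
theorem splitDepth_binomialTree (k : ℕ) (hk : 2 ≤ k) :
    (∃ d : ℕ, SplitDepth (binomialTree k) Set.univ d) ∧
    ∀ d : ℕ, SplitDepth (binomialTree k) Set.univ d → d = k - 1 := by
  have huniv : {z : Fin (2 ^ (k - 1)) | (z : ℕ) % 2 ^ 0 = 0} = Set.univ := by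
    ext z
    simp [Nat.mod_one]
  obtain ⟨hex, huniq⟩ := splitDepth_class k (k - 1) 0 0 (Nat.zero_le _) (by omega) (by norm_num)
  rw [huniv] at hex
  refine ⟨hex, fun d hd => huniq d ?_⟩
  rw [huniv]
  exact hd
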